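/- Let n ≥ 1 and let M ∈ Sp(2n) have the n×n block form M = [[A, B],[C, D]] with B and D invertible. Then for every ω ∈ ℂ with |ω| = 1, det(N M⁻¹ N M − ω I_{2n}) = (−4)ⁿ ωⁿ det(CBᵀ − ((Re ω − 1)/2) Iₙ), where the real matrices are regarded as complex matrices. -/

import Mathlib

open Matrix

/-- The standard symplectic matrix `J = [[0, -Iₙ], [Iₙ, 0]]` in `n × n` block form. -/
def Jmat (n : ℕ) : Matrix (Fin n ⊕ Fin n) (Fin n ⊕ Fin n) ℝ :=
  Matrix.fromBlocks 0 (-1) 1 0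

/-- The matrix `N = [[-Iₙ, 0], [0, Iₙ]]` in `n × n` block form. -/
def Nmat (n : ℕ) : Matrix (Fin n ⊕ Fin n) (Fin n ⊕ Fin n) ℝ :=
  Matrix.fromBlocks (-1) 0 0 1

lemma swap_det (n : ℕ) :
    (Matrix.fromBlocks (0 : Matrix (Fin n) (Fin n) ℂ) (1 : Matrix (Fin n) (Fin n) ℂ)
      (1 : Matrix (Fin n) (Fin n) ℂ) (0 : Matrix (Fin n) (Fin n) ℂ)).det = (-1 : ℂ) ^ n := by
  have hfac : Matrix.fromBlocks (0 : Matrix (Fin n) (Fin n) ℂ) (1 : Matrix (Fin n) (Fin n) ℂ)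
      (1 : Matrix (Fin n) (Fin n) ℂ) (0 : Matrix (Fin n) (Fin n) ℂ) =
      Matrix.fromBlocks 1 (1 : Matrix (Fin n) (Fin n) ℂ) 0 1 * Matrix.fromBlocks 1 0 (-1) 1 *
        Matrix.fromBlocks 1 1 0 1 * Matrix.fromBlocks (-1) 0 0 1 := by
    simp [Matrix.fromBlocks_multiply]
  rw [hfac, Matrix.det_mul, Matrix.det_mul, Matrix.det_mul,
    Matrix.det_fromBlocks_zero₂₁, Matrix.det_fromBlocks_zero₁₂,
    Matrix.det_fromBlocks_zero₂₁]
  simp [Matrix.det_neg]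

lemma det_fromBlocks_offdiag {n : ℕ} (X Y Z W : Matrix (Fin n) (Fin n) ℂ)
    [Invertible Y] :
    (Matrix.fromBlocks X Y Z W).det
      = (-1 : ℂ) ^ n * (Y.det * (Z - W * ⅟Y * X).det) := by
  have hfac : Matrix.fromBlocks X Y Z W =
      Matrix.fromBlocks Y X W Z * Matrix.fromBlocks 0 1 1 0 := by
    simp [Matrix.fromBlocks_multiply]
  rw [hfac, Matrix.det_mul, swap_det, Matrix.det_fromBlocks₁₁]
  ring

lemma fromBlocks_sub' {n : ℕ} (A B C D A' B' C' D' : Matrix (Fin n) (Fin n) ℂ) :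
    Matrix.fromBlocks A B C D - Matrix.fromBlocks A' B' C' D'
      = Matrix.fromBlocks (A - A') (B - B') (C - C') (D - D') := by
  simp [sub_eq_add_neg, Matrix.fromBlocks_neg, Matrix.fromBlocks_add]

lemma mapc_zero {m k : Type*} : (0 : Matrix m k ℝ).map Complex.ofReal = 0 := by
  ext i j; simp

lemma ofRealHom_coe : ⇑Complex.ofRealHom = Complex.ofReal := rfl

lemma mapc_mul {m : Type*} [Fintype m] (X Y : Matrix m m ℝ) :
    (X * Y).map Complex.ofReal = X.map Complex.ofReal * Y.map Complex.ofReal := by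
  rw [← ofRealHom_coe]; exact Matrix.map_mul

lemma mapc_one {m : Type*} [Fintype m] [DecidableEq m] :
    (1 : Matrix m m ℝ).map Complex.ofReal = 1 :=
  Matrix.map_one _ (by simp) (by simp)

lemma mapc_neg {m k : Type*} (X : Matrix m k ℝ) :
    (-X).map Complex.ofReal = -(X.map Complex.ofReal) := by
  ext i j; simp

lemma mapc_transpose {m k : Type*} (X : Matrix m k ℝ) :
    (Xᵀ).map Complex.ofReal = (X.map Complex.ofReal)ᵀ :=
  Matrix.transpose_map

theorem stmt_10 (n : ℕ) (hn : 1 ≤ n)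
    (A B C D : Matrix (Fin n) (Fin n) ℝ)
    (M : Matrix (Fin n ⊕ Fin n) (Fin n ⊕ Fin n) ℝ)
    (hM : M = Matrix.fromBlocks A B C D)
    (hsp : Mᵀ * Jmat n * M = Jmat n)
    (hB : IsUnit B) (hD : IsUnit D) (ω : ℂ) (hω : ‖ω‖ = 1) :
    ((Nmat n * M⁻¹ * Nmat n * M).map (Complex.ofReal ·) - ω • 1).det =
      (-4 : ℂ) ^ n * ω ^ n *
        ((C * Bᵀ).map (Complex.ofReal ·)
          - (((ω.re - 1) / 2 : ℝ) : ℂ) • (1 : Matrix (Fin n) (Fin n) ℂ)).det := by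
  subst hM
  -- Step 1 (over ℝ): K = [[Dᵀ, -Bᵀ], [-Cᵀ, Aᵀ]] is a two-sided inverse of M
  have hKM : Matrix.fromBlocks Dᵀ (-Bᵀ) (-Cᵀ) Aᵀ * Matrix.fromBlocks A B C D = 1 := by
    have h1 : (-(Jmat n)) * ((Matrix.fromBlocks A B C D)ᵀ * Jmat n *
        Matrix.fromBlocks A B C D) = 1 := by
      rw [hsp]
      simp [Jmat, Matrix.fromBlocks_neg, Matrix.fromBlocks_multiply,
        ← Matrix.fromBlocks_one]
    have h2 : (-(Jmat n)) * (Matrix.fromBlocks A B C D)ᵀ * Jmat n =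
        Matrix.fromBlocks Dᵀ (-Bᵀ) (-Cᵀ) Aᵀ := by
      simp [Jmat, Matrix.fromBlocks_transpose, Matrix.fromBlocks_neg,
        Matrix.fromBlocks_multiply]
    rw [← h2]
    simpa [Matrix.mul_assoc] using h1
  have hMinv : (Matrix.fromBlocks A B C D)⁻¹ = Matrix.fromBlocks Dᵀ (-Bᵀ) (-Cᵀ) Aᵀ :=
    Matrix.inv_eq_left_inv hKM
  rw [hMinv]
  -- Step 2: pass to ℂ
  set a : Matrix (Fin n) (Fin n) ℂ := A.map Complex.ofReal with ha
  set b : Matrix (Fin n) (Fin n) ℂ := B.map Complex.ofReal with hb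
  set c : Matrix (Fin n) (Fin n) ℂ := C.map Complex.ofReal with hc
  set d : Matrix (Fin n) (Fin n) ℂ := D.map Complex.ofReal with hd
  have hKMc : Matrix.fromBlocks dᵀ (-bᵀ) (-cᵀ) aᵀ * Matrix.fromBlocks a b c d = 1 := by
    have h := congrArg (fun X : Matrix (Fin n ⊕ Fin n) (Fin n ⊕ Fin n) ℝ =>
      X.map Complex.ofReal) hKM
    simp only [mapc_mul, mapc_one, Matrix.fromBlocks_map, mapc_neg, mapc_transpose] at h
    rw [ha, hb, hc, hd]
    exact h
  have hMKc : Matrix.fromBlocks a b c d * Matrix.fromBlocks dᵀ (-bᵀ) (-cᵀ) aᵀ = 1 :=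
    mul_eq_one_comm.mp hKMc
  -- block relations over ℂ
  have hKMb := hKMc
  rw [Matrix.fromBlocks_multiply, ← Matrix.fromBlocks_one, Matrix.fromBlocks_inj] at hKMb
  obtain ⟨r1, r2, r3, r4⟩ := hKMb
  have hMKb := hMKc
  rw [Matrix.fromBlocks_multiply, ← Matrix.fromBlocks_one, Matrix.fromBlocks_inj] at hMKb
  obtain ⟨s1, s2, s3, s4⟩ := hMKb
  -- invertibility over ℂ
  have hbu : IsUnit b := by
    have := hB.map Complex.ofRealHom.mapMatrix
    simpa [RingHom.mapMatrix_apply, ofRealHom_coe] using this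
  have hdu : IsUnit d := by
    have := hD.map Complex.ofRealHom.mapMatrix
    simpa [RingHom.mapMatrix_apply, ofRealHom_coe] using this
  have hdetb : IsUnit b.det := (Matrix.isUnit_iff_isUnit_det b).mp hbu
  have hdetd : IsUnit d.det := (Matrix.isUnit_iff_isUnit_det d).mp hdu
  have hdetbT : IsUnit bᵀ.det := by rwa [Matrix.det_transpose]
  have hdetdT : IsUnit dᵀ.det := by rwa [Matrix.det_transpose]
  -- rearranged block relations
  have r1' : dᵀ * a = 1 + bᵀ * c := by
    rw [Matrix.neg_mul, ← sub_eq_add_neg] at r1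
    exact sub_eq_iff_eq_add.mp r1
  have r2' : dᵀ * b = bᵀ * d := by
    rw [Matrix.neg_mul, ← sub_eq_add_neg] at r2
    exact sub_eq_zero.mp r2
  have s1' : a * dᵀ = 1 + b * cᵀ := by
    rw [Matrix.mul_neg, ← sub_eq_add_neg] at s1
    exact sub_eq_iff_eq_add.mp s1
  have s3' : c * dᵀ = d * cᵀ := by
    rw [Matrix.mul_neg, ← sub_eq_add_neg] at s3
    exact sub_eq_zero.mp s3
  -- d * b⁻¹ * a = (bᵀ)⁻¹ + c
  have hdb : d * b⁻¹ = bᵀ⁻¹ * dᵀ := by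
    calc d * b⁻¹ = bᵀ⁻¹ * (bᵀ * d) * b⁻¹ := by
          rw [← Matrix.mul_assoc, Matrix.nonsing_inv_mul bᵀ hdetbT, Matrix.one_mul]
      _ = bᵀ⁻¹ * (dᵀ * b) * b⁻¹ := by rw [r2']
      _ = bᵀ⁻¹ * dᵀ := by
          rw [Matrix.mul_assoc, Matrix.mul_assoc, Matrix.mul_nonsing_inv b hdetb,
            Matrix.mul_one]
  have hdba : d * b⁻¹ * a = bᵀ⁻¹ + c := by
    rw [hdb, Matrix.mul_assoc, r1', Matrix.mul_add, Matrix.mul_one,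
      ← Matrix.mul_assoc, Matrix.nonsing_inv_mul bᵀ hdetbT, Matrix.one_mul]
  -- det M = 1
  haveI hdinv : Invertible d := d.invertibleOfIsUnitDet hdetd
  have hdc : d⁻¹ * c = cᵀ * dᵀ⁻¹ := by
    calc d⁻¹ * c = d⁻¹ * (c * dᵀ) * dᵀ⁻¹ := by
          rw [Matrix.mul_assoc d⁻¹, Matrix.mul_assoc, Matrix.mul_nonsing_inv dᵀ hdetdT,
            Matrix.mul_one]
      _ = d⁻¹ * (d * cᵀ) * dᵀ⁻¹ := by rw [s3']
      _ = cᵀ * dᵀ⁻¹ := by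
          rw [← Matrix.mul_assoc, Matrix.nonsing_inv_mul d hdetd, Matrix.one_mul]
  have hbc : b * cᵀ = a * dᵀ - 1 := by rw [s1']; exact (add_sub_cancel_left 1 (b * cᵀ)).symm
  have hbdc : a - b * ⅟d * c = dᵀ⁻¹ := by
    rw [Matrix.invOf_eq_nonsing_inv, Matrix.mul_assoc, hdc, ← Matrix.mul_assoc, hbc,
      Matrix.sub_mul, Matrix.mul_assoc, Matrix.mul_nonsing_inv dᵀ hdetdT,
      Matrix.mul_one, Matrix.one_mul]
    exact sub_sub_cancel a dᵀ⁻¹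
  have hdetM : (Matrix.fromBlocks a b c d).det = 1 := by
    rw [Matrix.det_fromBlocks₂₂, hbdc, Matrix.det_nonsing_inv, Matrix.det_transpose,
      Ring.inverse_eq_inv]
    exact mul_inv_cancel₀ (hdetd.ne_zero)
  have hdetK : (Matrix.fromBlocks dᵀ (-bᵀ) (-cᵀ) aᵀ).det = 1 := by
    have h := congrArg Matrix.det hKMc
    rwa [Matrix.det_mul, hdetM, mul_one, Matrix.det_one] at h
  -- rewrite the goal through the complexified matrices
  have hNCmap : (Nmat n).map Complex.ofReal =
      (Matrix.fromBlocks (-1) 0 0 1 : Matrix (Fin n ⊕ Fin n) (Fin n ⊕ Fin n) ℂ) := by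
    rw [Nmat]
    simp only [Matrix.fromBlocks_map, mapc_neg, mapc_one, mapc_zero]
  have hKmap : (Matrix.fromBlocks Dᵀ (-Bᵀ) (-Cᵀ) Aᵀ).map Complex.ofReal
      = Matrix.fromBlocks dᵀ (-bᵀ) (-cᵀ) aᵀ := by
    rw [ha, hb, hc, hd]
    simp only [Matrix.fromBlocks_map, mapc_neg, mapc_transpose]
  have hMmap : (Matrix.fromBlocks A B C D).map Complex.ofReal = Matrix.fromBlocks a b c d := by
    rw [ha, hb, hc, hd]
    simp only [Matrix.fromBlocks_map]
  have hmapbig : (Nmat n * Matrix.fromBlocks Dᵀ (-Bᵀ) (-Cᵀ) Aᵀ * Nmat n *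
      Matrix.fromBlocks A B C D).map (Complex.ofReal ·)
      = Matrix.fromBlocks (-1) 0 0 1 * Matrix.fromBlocks dᵀ (-bᵀ) (-cᵀ) aᵀ *
        Matrix.fromBlocks (-1) 0 0 1 * Matrix.fromBlocks a b c d := by
    show (Nmat n * Matrix.fromBlocks Dᵀ (-Bᵀ) (-Cᵀ) Aᵀ * Nmat n *
      Matrix.fromBlocks A B C D).map Complex.ofReal = _
    rw [mapc_mul, mapc_mul, mapc_mul, hNCmap, hKmap, hMmap]
  rw [hmapbig]
  have hCBmap : (C * Bᵀ).map ((Complex.ofReal ·) : ℝ → ℂ) = c * bᵀ := by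
    show (C * Bᵀ).map Complex.ofReal = _
    rw [mapc_mul, mapc_transpose, ← hb, ← hc]
  rw [hCBmap]
  clear_value a b c d
  set NC : Matrix (Fin n ⊕ Fin n) (Fin n ⊕ Fin n) ℂ := Matrix.fromBlocks (-1) 0 0 1 with hNC
  have hNN : NC * NC = 1 := by
    rw [hNC, Matrix.fromBlocks_multiply]
    simp [← Matrix.fromBlocks_one]
  set G : Matrix (Fin n ⊕ Fin n) (Fin n ⊕ Fin n) ℂ :=
    Matrix.fromBlocks ((ω-1) • a) (-((1+ω) • b)) ((1+ω) • c) ((1-ω) • d) with hGdef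
  clear_value NC G
  have hg1 : NC * Matrix.fromBlocks a b c d - ω • (Matrix.fromBlocks a b c d * NC) = G := by
    rw [hNC, hGdef, Matrix.fromBlocks_multiply, Matrix.fromBlocks_multiply,
      Matrix.fromBlocks_smul, fromBlocks_sub']
    refine Matrix.fromBlocks_inj.mpr ⟨?_, ?_, ?_, ?_⟩ <;>
      · simp only [Matrix.neg_mul, Matrix.one_mul, Matrix.mul_neg, Matrix.mul_one,
          Matrix.zero_mul, Matrix.mul_zero, add_zero, zero_add, neg_neg]
        module
  have hfact : NC * Matrix.fromBlocks dᵀ (-bᵀ) (-cᵀ) aᵀ * NC * Matrix.fromBlocks a b c d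
      - ω • 1 = (NC * Matrix.fromBlocks dᵀ (-bᵀ) (-cᵀ) aᵀ) * G := by
    rw [← hg1, Matrix.mul_sub, Matrix.mul_smul]
    congr 1
    · rw [Matrix.mul_assoc]
    · congr 1
      symm
      calc NC * Matrix.fromBlocks dᵀ (-bᵀ) (-cᵀ) aᵀ * (Matrix.fromBlocks a b c d * NC)
          = NC * (Matrix.fromBlocks dᵀ (-bᵀ) (-cᵀ) aᵀ * Matrix.fromBlocks a b c d) * NC := by
            simp only [Matrix.mul_assoc]
        _ = 1 := by rw [hKMc, Matrix.mul_one, hNN]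
  rw [hfact, Matrix.det_mul, Matrix.det_mul, hdetK]
  have hdetNC : NC.det = (-1 : ℂ) ^ n := by
    rw [hNC, Matrix.det_fromBlocks_zero₂₁, Matrix.det_neg, Matrix.det_one, mul_one,
      Fintype.card_fin, mul_one]
  rw [hdetNC]
  -- scalar facts about ω
  have hone : ω * (starRingEnd ℂ) ω = 1 := by
    rw [Complex.mul_conj]
    norm_cast
    rw [Complex.normSq_eq_norm_sq, hω]
    norm_num
  have hre : ((ω.re : ℝ) : ℂ) = (ω + (starRingEnd ℂ) ω) / 2 := by
    rw [Complex.add_conj]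
    push_cast
    ring
  have hkey2 : 2 * ω * ((ω.re : ℝ) : ℂ) = 1 + ω ^ 2 := by
    rw [hre]
    linear_combination hone
  -- the determinant of G
  have hdetG : G.det = (-1 : ℂ) ^ n *
      ((1 - ω) ^ 2 • (1 : Matrix (Fin n) (Fin n) ℂ) - (4 * ω) • (c * bᵀ)).det := by
    rcases eq_or_ne ω (-1) with hω1 | hω1
    · -- the case ω = -1
      have hGval : G = Matrix.fromBlocks ((-2 : ℂ) • a) 0 0 ((2 : ℂ) • d) := by
        rw [hGdef, hω1]
        norm_num
      have hRHSval : (1 - ω) ^ 2 • (1 : Matrix (Fin n) (Fin n) ℂ) - (4 * ω) • (c * bᵀ)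
          = (4 : ℂ) • (1 + c * bᵀ) := by
        rw [hω1]
        match_scalars <;> ring
      rw [hGval, hRHSval, Matrix.det_fromBlocks_zero₂₁, Matrix.det_smul, Matrix.det_smul,
        Matrix.det_smul, Fintype.card_fin]
      have hadet : a.det * d.det = (1 + c * bᵀ).det := by
        rw [← Matrix.det_transpose d, ← Matrix.det_mul, s1', ← Matrix.det_transpose]
        congr 1
        rw [Matrix.transpose_add, Matrix.transpose_one, Matrix.transpose_mul,
          Matrix.transpose_transpose]
      calc (-2 : ℂ) ^ n * a.det * ((2 : ℂ) ^ n * d.det)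
          = ((-2 : ℂ) * 2) ^ n * (a.det * d.det) := by rw [mul_pow]; ring
        _ = ((-1 : ℂ) * 4) ^ n * (1 + c * bᵀ).det := by rw [hadet]; norm_num
        _ = (-1 : ℂ) ^ n * ((4 : ℂ) ^ n * (1 + c * bᵀ).det) := by rw [mul_pow]; ring
    · -- the case ω ≠ -1
      have hu : (1 + ω) ≠ 0 := by
        intro h
        exact hω1 (by linear_combination h)
      have hu' : -(1 + ω) ≠ 0 := neg_ne_zero.mpr hu
      have hu'' : (-1 - ω) ≠ 0 := by
        intro h
        exact hu (by linear_combination -h)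
      have hdetY : (-((1 + ω) • b)).det = (-(1 + ω)) ^ n * b.det := by
        rw [← neg_smul, Matrix.det_smul, Fintype.card_fin]
      have hYunit : IsUnit (-((1 + ω) • b)).det := by
        rw [hdetY]
        exact ((isUnit_iff_ne_zero.mpr hu').pow n).mul hdetb
      haveI hYinv : Invertible (-((1 + ω) • b)) := (-((1 + ω) • b)).invertibleOfIsUnitDet hYunit
      have hYinv_eq : ⅟(-((1 + ω) • b)) = (-(1 + ω))⁻¹ • b⁻¹ := by
        apply invOf_eq_right_inv
        rw [← neg_smul, Matrix.smul_mul, Matrix.mul_smul, smul_smul,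
          Matrix.mul_nonsing_inv b hdetb, mul_inv_cancel₀ hu', one_smul]
      rw [hGdef, det_fromBlocks_offdiag, hYinv_eq, hdetY]
      have hfin : (1 + ω) • c - ((1 - ω) • d) * ((-(1 + ω))⁻¹ • b⁻¹) * ((ω - 1) • a)
          = (-(1 + ω))⁻¹ • ((1 - ω) ^ 2 • bᵀ⁻¹ - (4 * ω) • c) := by
        simp only [Matrix.smul_mul, Matrix.mul_smul, smul_smul]
        rw [hdba, smul_add]
        match_scalars
        · linear_combination (-(1 + ω)) * mul_inv_cancel₀ hu'
        · ring
      rw [hfin, Matrix.det_smul, Fintype.card_fin]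
      have hdetprod : b.det * ((1 - ω) ^ 2 • bᵀ⁻¹ - (4 * ω) • c).det
          = ((1 - ω) ^ 2 • (1 : Matrix (Fin n) (Fin n) ℂ) - (4 * ω) • (c * bᵀ)).det := by
        rw [← Matrix.det_transpose b, mul_comm, ← Matrix.det_mul]
        congr 1
        rw [Matrix.sub_mul, Matrix.smul_mul, Matrix.smul_mul,
          Matrix.nonsing_inv_mul bᵀ hdetbT]
      calc (-1 : ℂ) ^ n * ((-(1 + ω)) ^ n * b.det *
            (((-(1 + ω))⁻¹) ^ n * ((1 - ω) ^ 2 • bᵀ⁻¹ - (4 * ω) • c).det))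
          = (-1 : ℂ) ^ n * (((-(1 + ω)) * (-(1 + ω))⁻¹) ^ n *
            (b.det * ((1 - ω) ^ 2 • bᵀ⁻¹ - (4 * ω) • c).det)) := by rw [mul_pow]; ring
        _ = (-1 : ℂ) ^ n * (b.det * ((1 - ω) ^ 2 • bᵀ⁻¹ - (4 * ω) • c).det) := by
            rw [mul_inv_cancel₀ hu', one_pow, one_mul]
        _ = (-1 : ℂ) ^ n *
            ((1 - ω) ^ 2 • (1 : Matrix (Fin n) (Fin n) ℂ) - (4 * ω) • (c * bᵀ)).det := by
            rw [hdetprod]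
  rw [hdetG]
  have hRHS : (-4 : ℂ) ^ n * ω ^ n * ((c * bᵀ) - (((ω.re - 1) / 2 : ℝ) : ℂ) •
      (1 : Matrix (Fin n) (Fin n) ℂ)).det
      = ((1 - ω) ^ 2 • (1 : Matrix (Fin n) (Fin n) ℂ) - (4 * ω) • (c * bᵀ)).det := by
    have hds := Matrix.det_smul ((c * bᵀ) - (((ω.re - 1) / 2 : ℝ) : ℂ) •
      (1 : Matrix (Fin n) (Fin n) ℂ)) (-(4 * ω))
    rw [Fintype.card_fin] at hds
    rw [show ((-4 : ℂ)) ^ n * ω ^ n = (-(4 * ω)) ^ n from by rw [← mul_pow]; ring_nf,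
      ← hds]
    congr 1
    match_scalars
    · ring
    · push_cast
      linear_combination hkey2
  rw [hRHS]
  rw [mul_one, ← mul_assoc, ← mul_pow]
  norm_num
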